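/- arXiv:2205.10080 — 4 statements merged into one kernel-verified Lean document; each statement's English description precedes it below -/
import Mathlib

section
/- Let k be a natural number, let x_i < x1s < x_{i+1} be real numbers with h = x_{i+1} − x_i and h1p = x_{i+1} − x1s, let l > 0 and y_{j+1} = y_j + l. Let u⁻, u⁺ : ℝ² → ℝ be of class C^{k+1}. Suppose K is a constant with |∂_x^{k+1} u⁻(x, y_{j+1})| ≤ K and |∂_x^{k+1} u⁺(x, y_{j+1})| ≤ K for all x ∈ [x_i, x_{i+1}], and M is a constant with |∂_x^{p} ∂_y^{q} u⁻(x,y)| ≤ M for all (x,y) ∈ [x_i, x_{i+1}] × [y_j, y_{j+1}] and all p, q ≥ 0 with p + q = k + 1. Then |u⁺(x_{i+1}, y_{j+1}) − Σ_{p=0}^{k} Σ_{q=0}^{k−p} (h^p l^q)/(p! q!) · ∂_x^p ∂_y^q u⁻(x_i, y_j) − Σ_{r=0}^{k} (h1p)^r / r! · (∂_x^r u⁺(x1s, y_{j+1}) − ∂_x^r u⁻(x1s, y_{j+1}))| ≤ 2K h^{k+1}/(k+1)! + M (h + l)^{k+1}/(k+1)!. -/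
open Set Finset

/-! ### Directional derivative operators on `ℝ × ℝ` -/

noncomputable def Dv (v : ℝ × ℝ) (U : ℝ × ℝ → ℝ) : ℝ × ℝ → ℝ := fun z => fderiv ℝ U z v

lemma Dv_contDiff {U : ℝ × ℝ → ℝ} {m : ℕ} (hU : ContDiff ℝ ((m : ℕ) + 1) U) (v : ℝ × ℝ) :
    ContDiff ℝ (m : ℕ) (Dv v U) := by
  have h1 : ContDiff ℝ (m : ℕ) (fderiv ℝ U) := hU.fderiv_right le_rfl
  exact (ContinuousLinearMap.apply ℝ ℝ v).contDiff.comp h1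

lemma Dv_iterate_contDiff {U : ℝ × ℝ → ℝ} {m q : ℕ} (hU : ContDiff ℝ (m : ℕ) U)
    (hq : q ≤ m) (v : ℝ × ℝ) : ContDiff ℝ ((m - q : ℕ)) ((Dv v)^[q] U) := by
  induction q with
  | zero => simpa using hU
  | succ q ih =>
    have hq' : q ≤ m := by omega
    have h1 := ih hq'
    have he : (m - q : ℕ) = (m - (q + 1)) + 1 := by omega
    rw [he] at h1
    rw [Function.iterate_succ_apply']
    exact Dv_contDiff (by exact_mod_cast h1) v

lemma iterate_diff {U : ℝ × ℝ → ℝ} {m q : ℕ} (hU : ContDiff ℝ (m : ℕ) U) (hq : q < m)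
    (v : ℝ × ℝ) : Differentiable ℝ ((Dv v)^[q] U) := by
  have h := Dv_iterate_contDiff hU (le_of_lt hq) v
  exact h.differentiable (by exact_mod_cast by omega :
    ((m - q : ℕ) : WithTop ℕ∞) ≠ 0)

lemma Dv_comm {U : ℝ × ℝ → ℝ} (hU : ContDiff ℝ 2 U) (v w : ℝ × ℝ) :
    Dv v (Dv w U) = Dv w (Dv v U) := by
  funext z
  have hsymm : IsSymmSndFDerivAt ℝ U z := (hU.contDiffAt).isSymmSndFDerivAt (by rw [minSmoothness_of_isRCLikeNormedField])
  have hfd : DifferentiableAt ℝ (fderiv ℝ U) z := by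
    have : ContDiff ℝ 1 (fderiv ℝ U) := hU.fderiv_right (by norm_num)
    exact this.differentiable one_ne_zero |>.differentiableAt
  have key : ∀ a b : ℝ × ℝ, Dv a (Dv b U) z = fderiv ℝ (fderiv ℝ U) z a b := by
    intro a b
    have hcomp : Dv b U = fun z' => (ContinuousLinearMap.apply ℝ ℝ b) (fderiv ℝ U z') := rfl
    have : fderiv ℝ (Dv b U) z
        = (ContinuousLinearMap.apply ℝ ℝ b).comp (fderiv ℝ (fderiv ℝ U) z) := by
      rw [hcomp]
      exact (ContinuousLinearMap.apply ℝ ℝ b).hasFDerivAt.comp z hfd.hasFDerivAt |>.fderiv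
    show fderiv ℝ (Dv b U) z a = _
    rw [this]
    rfl
  rw [key, key, hsymm v w]

lemma Dv_comm_iterate {p : ℕ} {V : ℝ × ℝ → ℝ} (hV : ContDiff ℝ ((p : ℕ) + 1) V)
    (v w : ℝ × ℝ) : Dv w ((Dv v)^[p] V) = (Dv v)^[p] (Dv w V) := by
  induction p generalizing V with
  | zero => rfl
  | succ p ih =>
    have hV2 : ContDiff ℝ 2 V :=
      hV.of_le (by exact_mod_cast by omega : (2 : WithTop ℕ∞) ≤ (p : ℕ) + 1 + 1)
    have hVv : ContDiff ℝ ((p : ℕ) + 1) (Dv v V) := by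
      have := Dv_contDiff (m := p + 1) (by exact_mod_cast hV) v
      exact_mod_cast this
    rw [Function.iterate_succ_apply, ih hVv, Dv_comm hV2 w v, ← Function.iterate_succ_apply]

/-! ### Slice derivatives -/

lemma hasDerivAt_slice_x {W : ℝ × ℝ → ℝ} (hW : Differentiable ℝ W) (x y : ℝ) :
    HasDerivAt (fun x' => W (x', y)) (Dv (1, 0) W (x, y)) x := by
  have hline : HasDerivAt (fun x' : ℝ => (x', y)) ((1 : ℝ), (0 : ℝ)) x :=
    (hasDerivAt_id x).prodMk (hasDerivAt_const x y)
  exact (hW (x, y)).hasFDerivAt.comp_hasDerivAt x hline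

lemma hasDerivAt_slice_y {W : ℝ × ℝ → ℝ} (hW : Differentiable ℝ W) (x y : ℝ) :
    HasDerivAt (fun y' => W (x, y')) (Dv (0, 1) W (x, y)) y := by
  have hline : HasDerivAt (fun y' : ℝ => (x, y')) ((0 : ℝ), (1 : ℝ)) y :=
    (hasDerivAt_const y x).prodMk (hasDerivAt_id y)
  exact (hW (x, y)).hasFDerivAt.comp_hasDerivAt y hline

lemma iteratedDeriv_slice_y {U : ℝ × ℝ → ℝ} {m q : ℕ} (hU : ContDiff ℝ (m : ℕ) U)
    (hq : q ≤ m) (x y : ℝ) :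
    iteratedDeriv q (fun y' => U (x, y')) y = (Dv (0, 1))^[q] U (x, y) := by
  induction q generalizing y with
  | zero => simp
  | succ q ih =>
    rw [iteratedDeriv_succ]
    have hfun : iteratedDeriv q (fun y' => U (x, y')) = fun y'' => (Dv (0, 1))^[q] U (x, y'') :=
      funext fun y'' => ih (by omega) y''
    rw [hfun, Function.iterate_succ_apply' (Dv (0, 1)) q U]
    exact (hasDerivAt_slice_y (W := (Dv (0, 1))^[q] U) (iterate_diff hU (by omega) _) x y).deriv

lemma iteratedDeriv_slice_x {U : ℝ × ℝ → ℝ} {m p : ℕ} (hU : ContDiff ℝ (m : ℕ) U)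
    (hp : p ≤ m) (x y : ℝ) :
    iteratedDeriv p (fun x' => U (x', y)) x = (Dv (1, 0))^[p] U (x, y) := by
  induction p generalizing x with
  | zero => simp
  | succ p ih =>
    rw [iteratedDeriv_succ]
    have hfun : iteratedDeriv p (fun x' => U (x', y)) = fun x'' => (Dv (1, 0))^[p] U (x'', y) :=
      funext fun x'' => ih (by omega) x''
    rw [hfun, Function.iterate_succ_apply' (Dv (1, 0)) p U]
    exact (hasDerivAt_slice_x (W := (Dv (1, 0))^[p] U) (iterate_diff hU (by omega) _) x y).deriv

lemma mixed_eq {u : ℝ → ℝ → ℝ} {m p q : ℕ}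
    (hU : ContDiff ℝ (m : ℕ) (fun z : ℝ × ℝ => u z.1 z.2)) (hpq : p + q ≤ m) (x y : ℝ) :
    iteratedDeriv p (fun x' => iteratedDeriv q (fun y' => u x' y') y) x
      = (Dv (1, 0))^[p] ((Dv (0, 1))^[q] (fun z : ℝ × ℝ => u z.1 z.2)) (x, y) := by
  have h1 : (fun x' => iteratedDeriv q (fun y' => u x' y') y)
      = fun x' => (Dv (0, 1))^[q] (fun z : ℝ × ℝ => u z.1 z.2) (x', y) :=
    funext fun x' => iteratedDeriv_slice_y hU (by omega) x' y
  rw [h1]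
  have hq : ContDiff ℝ ((m - q : ℕ)) ((Dv (0, 1))^[q] (fun z : ℝ × ℝ => u z.1 z.2)) :=
    Dv_iterate_contDiff hU (by omega) _
  exact iteratedDeriv_slice_x hq (by omega) x y

/-! ### Pascal recombination and triangle reindexing -/

lemma pascal_sum (n : ℕ) (v1 v2 : ℝ) (B : ℕ → ℕ → ℝ) :
    ∑ p ∈ range (n + 1), (n.choose p : ℝ) * v1 ^ p * v2 ^ (n - p) *
        (v1 * B (p + 1) (n - p) + v2 * B p (n - p + 1))
      = ∑ p ∈ range (n + 2), ((n + 1).choose p : ℝ) * v1 ^ p * v2 ^ (n + 1 - p) *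
          B p (n + 1 - p) := by
  have hsplit : ∀ p ∈ range (n + 1),
      (n.choose p : ℝ) * v1 ^ p * v2 ^ (n - p) *
        (v1 * B (p + 1) (n - p) + v2 * B p (n - p + 1))
      = (n.choose p : ℝ) * v1 ^ (p + 1) * v2 ^ (n - p) * B (p + 1) (n - p)
        + (n.choose p : ℝ) * v1 ^ p * v2 ^ (n - p + 1) * B p (n - p + 1) := by
    intro p _; ring
  rw [Finset.sum_congr rfl hsplit, Finset.sum_add_distrib]
  rw [Finset.sum_range_succ' _ (n + 1)]
  simp only [Nat.succ_sub_succ_eq_sub, Nat.choose_zero_right, Nat.cast_one, pow_zero,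
    Nat.sub_zero, Nat.choose_succ_succ, Nat.cast_add]
  have hdist : ∀ p ∈ range (n + 1),
      ((n.choose p : ℝ) + (n.choose (p + 1) : ℝ)) * v1 ^ (p + 1) * v2 ^ (n - p) * B (p + 1) (n - p)
      = (n.choose p : ℝ) * v1 ^ (p + 1) * v2 ^ (n - p) * B (p + 1) (n - p)
        + (n.choose (p + 1) : ℝ) * v1 ^ (p + 1) * v2 ^ (n - p) * B (p + 1) (n - p) := by
    intro p _; ring
  rw [Finset.sum_congr rfl hdist, Finset.sum_add_distrib]
  have h2 : ∑ p ∈ range (n + 1), (n.choose p : ℝ) * v1 ^ p * v2 ^ (n - p + 1) * B p (n - p + 1)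
      = ∑ p ∈ range (n + 1), (n.choose (p + 1) : ℝ) * v1 ^ (p + 1) * v2 ^ (n - p) * B (p + 1) (n - p)
        + 1 * 1 * v2 ^ (n + 1) * B 0 (n + 1) := by
    rw [Finset.sum_range_succ' _ n]
    rw [Finset.sum_range_succ _ n]
    simp only [Nat.choose_succ_self, Nat.cast_zero, zero_mul, add_zero,
      Nat.choose_zero_right, Nat.cast_one, pow_zero, Nat.sub_zero]
    congr 1
    · apply Finset.sum_congr rfl
      intro p hp
      have hpn : p < n := Finset.mem_range.mp hp
      have : n - (p + 1) + 1 = n - p := by omega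
      rw [this]
  rw [h2]
  ring

lemma triangle_sum (k : ℕ) (f : ℕ → ℕ → ℝ) :
    ∑ p ∈ range (k + 1), ∑ q ∈ range (k - p + 1), f p q
      = ∑ n ∈ range (k + 1), ∑ p ∈ range (n + 1), f p (n - p) := by
  induction k with
  | zero => simp
  | succ k ih =>
    rw [Finset.sum_range_succ (fun n => ∑ p ∈ range (n + 1), f p (n - p)) (k + 1), ← ih]
    rw [Finset.sum_range_succ (fun p => ∑ q ∈ range (k + 1 - p + 1), f p q) (k + 1)]
    have hstep : ∀ p ∈ range (k + 1),
        ∑ q ∈ range (k + 1 - p + 1), f p q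
          = (∑ q ∈ range (k - p + 1), f p q) + f p (k + 1 - p) := by
      intro p hp
      have hpk : p ≤ k := Nat.lt_succ_iff.mp (Finset.mem_range.mp hp)
      have h1 : k + 1 - p + 1 = (k - p + 1) + 1 := by omega
      have h2 : k + 1 - p = k - p + 1 := by omega
      rw [h1, Finset.sum_range_succ, h2]
    rw [Finset.sum_congr rfl hstep, Finset.sum_add_distrib]
    rw [Finset.sum_range_succ (fun p => f p (k + 1 - p)) (k + 1)]
    have h0 : k + 1 - (k + 1) = 0 := by omega
    rw [h0]
    have h1 : ∑ q ∈ range (0 + 1), f (k + 1) q = f (k + 1) 0 := by simp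
    rw [h1]
    ring

/-! ### Derivative along a line -/

lemma hasDerivAt_line {A : ℝ × ℝ → ℝ} (hA : Differentiable ℝ A) (c v : ℝ × ℝ) (t : ℝ) :
    HasDerivAt (fun t' => A (c + t' • v))
      (v.1 * Dv (1, 0) A (c + t • v) + v.2 * Dv (0, 1) A (c + t • v)) t := by
  have hline : HasDerivAt (fun t' : ℝ => c + t' • v) v t := by
    simpa using ((hasDerivAt_id t).smul_const v).const_add c
  have hcomp := (hA (c + t • v)).hasFDerivAt.comp_hasDerivAt t hline
  have hv : fderiv ℝ A (c + t • v) v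
      = v.1 * Dv (1, 0) A (c + t • v) + v.2 * Dv (0, 1) A (c + t • v) := by
    have hvdec : v = v.1 • ((1 : ℝ), (0 : ℝ)) + v.2 • ((0 : ℝ), (1 : ℝ)) := by
      ext <;> simp
    rw [show (fderiv ℝ A (c + t • v)) v
        = (fderiv ℝ A (c + t • v)) (v.1 • ((1:ℝ),(0:ℝ)) + v.2 • ((0:ℝ),(1:ℝ))) from by
      rw [← hvdec]]
    rw [map_add, map_smul, map_smul, smul_eq_mul, smul_eq_mul]
    rfl
  rw [← hv]
  exact hcomp

lemma iteratedDeriv_line {U : ℝ × ℝ → ℝ} {m : ℕ} (hU : ContDiff ℝ (m : ℕ) U)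
    (c v : ℝ × ℝ) {n : ℕ} (hn : n ≤ m) (t : ℝ) :
    iteratedDeriv n (fun t' => U (c + t' • v)) t
      = ∑ p ∈ range (n + 1), (n.choose p : ℝ) * v.1 ^ p * v.2 ^ (n - p) *
          ((Dv (1, 0))^[p] ((Dv (0, 1))^[n - p] U) (c + t • v)) := by
  induction n generalizing t with
  | zero => simp
  | succ n ih =>
    rw [iteratedDeriv_succ]
    have hfun : iteratedDeriv n (fun t' => U (c + t' • v))
        = fun t' => ∑ p ∈ range (n + 1), (n.choose p : ℝ) * v.1 ^ p * v.2 ^ (n - p) *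
            ((Dv (1, 0))^[p] ((Dv (0, 1))^[n - p] U) (c + t' • v)) :=
      funext fun t' => ih (by omega) t'
    rw [hfun]
    have hterm : ∀ p ∈ range (n + 1), HasDerivAt
        (fun t' => (n.choose p : ℝ) * v.1 ^ p * v.2 ^ (n - p) *
            ((Dv (1, 0))^[p] ((Dv (0, 1))^[n - p] U) (c + t' • v)))
        ((n.choose p : ℝ) * v.1 ^ p * v.2 ^ (n - p) *
          (v.1 * ((Dv (1, 0))^[p + 1] ((Dv (0, 1))^[n - p] U) (c + t • v))
            + v.2 * ((Dv (1, 0))^[p] ((Dv (0, 1))^[n - p + 1] U) (c + t • v)))) t := by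
      intro p hp
      have hpn : p ≤ n := Nat.lt_succ_iff.mp (Finset.mem_range.mp hp)
      have hq1 : ContDiff ℝ ((m - (n - p) : ℕ)) ((Dv (0, 1))^[n - p] U) :=
        Dv_iterate_contDiff hU (by omega) _
      have hA : ContDiff ℝ ((m - (n - p) - p : ℕ)) ((Dv (1, 0))^[p] ((Dv (0, 1))^[n - p] U)) :=
        Dv_iterate_contDiff hq1 (by omega) _
      have hAdiff : Differentiable ℝ ((Dv (1, 0))^[p] ((Dv (0, 1))^[n - p] U)) :=
        hA.differentiable (by exact_mod_cast by omega :
          ((m - (n - p) - p : ℕ) : WithTop ℕ∞) ≠ 0)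
      have hline := (hasDerivAt_line hAdiff c v t).const_mul
        ((n.choose p : ℝ) * v.1 ^ p * v.2 ^ (n - p))
      have e1 : Dv (1, 0) ((Dv (1, 0))^[p] ((Dv (0, 1))^[n - p] U))
          = (Dv (1, 0))^[p + 1] ((Dv (0, 1))^[n - p] U) :=
        (Function.iterate_succ_apply' (Dv (1, 0)) p ((Dv (0, 1))^[n - p] U)).symm
      have hq1' : ContDiff ℝ ((p : ℕ) + 1) ((Dv (0, 1))^[n - p] U) := by
        have : ((p : ℕ) + 1 : WithTop ℕ∞) ≤ ((m - (n - p) : ℕ) : WithTop ℕ∞) := by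
          exact_mod_cast by omega
        exact hq1.of_le this
      have e2 : Dv (0, 1) ((Dv (1, 0))^[p] ((Dv (0, 1))^[n - p] U))
          = (Dv (1, 0))^[p] ((Dv (0, 1))^[n - p + 1] U) := by
        rw [Dv_comm_iterate hq1' (1, 0) (0, 1)]
        rw [Function.iterate_succ_apply' (Dv (0, 1)) (n - p) U]
      rw [e1, e2] at hline
      exact hline
    have hsum := HasDerivAt.fun_sum hterm
    rw [hsum.deriv]
    have := pascal_sum n v.1 v.2
      (fun a b => (Dv (1, 0))^[a] ((Dv (0, 1))^[b] U) (c + t • v))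
    simpa using this

/-! ### 1-D Taylor bound -/

lemma iteratedDerivWithin_eq_global {f : ℝ → ℝ} {n : ℕ} {m : WithTop ℕ∞}
    (hf : ContDiff ℝ m f) (hn : ((n : ℕ) : WithTop ℕ∞) ≤ m) {s : Set ℝ}
    (hs : UniqueDiffOn ℝ s) : ∀ x ∈ s, iteratedDerivWithin n f s x = iteratedDeriv n f x := by
  induction n with
  | zero => intro x hx; simp
  | succ n ih =>
    intro x hx
    have hn' : ((n : ℕ) : WithTop ℕ∞) ≤ m :=
      le_trans (by exact_mod_cast Nat.le_succ n) hn
    have hdiff : Differentiable ℝ (iteratedDeriv n f) :=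
      hf.differentiable_iteratedDeriv n
        (lt_of_lt_of_le (by exact_mod_cast Nat.lt_succ_self n) hn)
    rw [iteratedDerivWithin_succ,
      derivWithin_congr (fun y hy => ih hn' y hy) (ih hn' x hx),
      (hdiff x).derivWithin (hs x hx), ← iteratedDeriv_succ]

lemma taylor_bound_1d {f : ℝ → ℝ} {k : ℕ} (hf : ContDiff ℝ ((k : ℕ) + 1) f)
    {a b C : ℝ} (hab : a < b)
    (hC : ∀ x ∈ Set.Icc a b, |iteratedDeriv (k + 1) f x| ≤ C) :
    |f b - ∑ r ∈ range (k + 1), (b - a) ^ r / (r.factorial : ℝ) * iteratedDeriv r f a|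
      ≤ C * (b - a) ^ (k + 1) / ((k + 1).factorial : ℝ) := by
  have hud : UniqueDiffOn ℝ (Set.Icc a b) := uniqueDiffOn_Icc hab
  have hk1 : ((k + 1 : ℕ) : WithTop ℕ∞) = (k : ℕ) + 1 := by push_cast; rfl
  have heqW : ∀ x ∈ Set.Icc a b,
      iteratedDerivWithin (k + 1) f (Set.Icc a b) x = iteratedDeriv (k + 1) f x :=
    iteratedDerivWithin_eq_global hf (by rw [hk1]) hud
  have hdiff : Differentiable ℝ (iteratedDeriv k f) :=
    hf.differentiable_iteratedDeriv k (by exact_mod_cast Nat.lt_succ_self k)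
  have hdiffOn : DifferentiableOn ℝ (iteratedDerivWithin k f (Set.Icc a b)) (Set.Ioo a b) := by
    apply DifferentiableOn.congr (f := iteratedDeriv k f)
    · exact hdiff.differentiableOn
    · intro x hx
      exact iteratedDerivWithin_eq_global hf
        (by exact_mod_cast le_of_lt (by exact_mod_cast Nat.lt_succ_self k :
          ((k : ℕ) : WithTop ℕ∞) < (k : ℕ) + 1)) hud x (Set.Ioo_subset_Icc_self hx)
  obtain ⟨x', hx', heq⟩ := taylor_mean_remainder_lagrange (n := k) hab.ne
    (hf.contDiffOn.of_le (by exact_mod_cast Nat.le_succ k))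
    (by rw [Set.uIcc_of_le hab.le, Set.uIoo_of_le hab.le]; exact hdiffOn)
  rw [Set.uIcc_of_le hab.le] at heq
  rw [Set.uIoo_of_le hab.le] at hx'
  have hsum : taylorWithinEval f k (Set.Icc a b) a b
      = ∑ r ∈ range (k + 1), (b - a) ^ r / (r.factorial : ℝ) * iteratedDeriv r f a := by
    rw [taylor_within_apply]
    apply Finset.sum_congr rfl
    intro r hr
    have : iteratedDerivWithin r f (Set.Icc a b) a = iteratedDeriv r f a := by
      apply iteratedDerivWithin_eq_global hf _ hud a (Set.left_mem_Icc.mpr (le_of_lt hab))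
      have hrk : r ≤ k + 1 := by
        have := Finset.mem_range.mp hr; omega
      exact_mod_cast by exact_mod_cast Nat.cast_le.mpr hrk
    rw [this, smul_eq_mul]
    ring
  rw [hsum] at heq
  rw [heq, heqW x' (Set.Ioo_subset_Icc_self hx')]
  rw [abs_div, abs_mul]
  have hba : (0:ℝ) < b - a := by linarith
  rw [abs_of_pos (pow_pos hba (k + 1)), Nat.abs_cast]
  have hCnn : 0 ≤ C := le_trans (abs_nonneg _) (hC a (Set.left_mem_Icc.mpr hab.le))
  gcongr
  exact hC x' (Set.Ioo_subset_Icc_self hx')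

/-- Lemma 1: jump-corrected two-dimensional Taylor expansion for an irregular point
whose grid line parallel to the x-axis crosses the interface at `(x1s, yjp1)`. -/
theorem jump_corrected_taylor_x
    (k : ℕ) (xi x1s xip1 : ℝ) (hx1 : xi < x1s) (hx2 : x1s < xip1)
    (h : ℝ) (hh : h = xip1 - xi)
    (h1p : ℝ) (hh1p : h1p = xip1 - x1s)
    (l : ℝ) (hl : 0 < l) (yj yjp1 : ℝ) (hy : yjp1 = yj + l)
    (um up : ℝ → ℝ → ℝ)
    (hum : ContDiff ℝ (k + 1) (fun q : ℝ × ℝ => um q.1 q.2))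
    (hup : ContDiff ℝ (k + 1) (fun q : ℝ × ℝ => up q.1 q.2))
    (K M : ℝ)
    (hKm : ∀ x ∈ Set.Icc xi xip1,
      |iteratedDeriv (k + 1) (fun x' => um x' yjp1) x| ≤ K)
    (hKp : ∀ x ∈ Set.Icc xi xip1,
      |iteratedDeriv (k + 1) (fun x' => up x' yjp1) x| ≤ K)
    (hM : ∀ p q : ℕ, p + q = k + 1 → ∀ x ∈ Set.Icc xi xip1, ∀ y ∈ Set.Icc yj yjp1,
      |iteratedDeriv p (fun x' => iteratedDeriv q (fun y' => um x' y') y) x| ≤ M) :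
    |up xip1 yjp1
      - ∑ p ∈ Finset.range (k + 1), ∑ q ∈ Finset.range (k - p + 1),
          (h ^ p * l ^ q) / ((p.factorial : ℝ) * (q.factorial : ℝ)) *
            iteratedDeriv p (fun x' => iteratedDeriv q (fun y' => um x' y') yj) xi
      - ∑ r ∈ Finset.range (k + 1),
          h1p ^ r / (r.factorial : ℝ) *
            (iteratedDeriv r (fun x' => up x' yjp1) x1s
              - iteratedDeriv r (fun x' => um x' yjp1) x1s)|
    ≤ 2 * K * h ^ (k + 1) / ((k + 1).factorial : ℝ)
      + M * (h + l) ^ (k + 1) / ((k + 1).factorial : ℝ) := by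
  subst hh hh1p hy
  have hxx : xi < xip1 := lt_trans hx1 hx2
  have hhpos : (0:ℝ) < xip1 - xi := by linarith
  have hK0 : 0 ≤ K := le_trans (abs_nonneg _) (hKp xi ⟨le_rfl, hxx.le⟩)
  -- casts of smoothness
  have hum' : ContDiff ℝ ((k + 1 : ℕ) : WithTop ℕ∞) (fun q : ℝ × ℝ => um q.1 q.2) := by
    exact_mod_cast hum
  have hup' : ContDiff ℝ ((k + 1 : ℕ) : WithTop ℕ∞) (fun q : ℝ × ℝ => up q.1 q.2) := by
    exact_mod_cast hup
  -- the two one-dimensional slices at height yjp1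
  have hfm : ContDiff ℝ ((k : ℕ) + 1) (fun x' => um x' (yj + l)) :=
    hum.comp (contDiff_id.prodMk contDiff_const)
  have hfp : ContDiff ℝ ((k : ℕ) + 1) (fun x' => up x' (yj + l)) :=
    hup.comp (contDiff_id.prodMk contDiff_const)
  -- Part A : Taylor along x for up, on [x1s, xip1]
  have hA := taylor_bound_1d hfp hx2
    (fun x hx => hKp x ⟨le_trans hx1.le hx.1, hx.2⟩)
  have hB := taylor_bound_1d hfm hx2
    (fun x hx => hKm x ⟨le_trans hx1.le hx.1, hx.2⟩)
  -- upgrade (xip1 - x1s) to (xip1 - xi)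
  have hup1 : K * (xip1 - x1s) ^ (k + 1) / ((k + 1).factorial : ℝ)
      ≤ K * (xip1 - xi) ^ (k + 1) / ((k + 1).factorial : ℝ) := by
    gcongr
    all_goals linarith
  -- Part C : two-dimensional Taylor along the straight line
  set U : ℝ × ℝ → ℝ := fun q => um q.1 q.2 with hU
  set c : ℝ × ℝ := (xi, yj) with hc
  set v : ℝ × ℝ := (xip1 - xi, l) with hv
  set g : ℝ → ℝ := fun t => U (c + t • v) with hg
  have hgsm : ContDiff ℝ ((k : ℕ) + 1) g :=
    hum.comp (contDiff_const.add (contDiff_id.smul contDiff_const))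
  have hzmem : ∀ t : ℝ, t ∈ Set.Icc (0:ℝ) 1 →
      (c + t • v).1 ∈ Set.Icc xi xip1 ∧ (c + t • v).2 ∈ Set.Icc yj (yj + l) := by
    intro t ht
    obtain ⟨ht0, ht1⟩ := ht
    constructor
    · constructor
      · show xi ≤ xi + t * (xip1 - xi)
        nlinarith
      · show xi + t * (xip1 - xi) ≤ xip1
        nlinarith
    · constructor
      · show yj ≤ yj + t * l
        nlinarith
      · show yj + t * l ≤ yj + l
        nlinarith
  have hgbound : ∀ t ∈ Set.Icc (0:ℝ) 1,
      |iteratedDeriv (k + 1) g t| ≤ M * ((xip1 - xi) + l) ^ (k + 1) := by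
    intro t ht
    rw [show iteratedDeriv (k + 1) g t
        = ∑ p ∈ range (k + 1 + 1), ((k + 1).choose p : ℝ) * v.1 ^ p * v.2 ^ (k + 1 - p) *
            ((Dv (1, 0))^[p] ((Dv (0, 1))^[k + 1 - p] U) (c + t • v)) from
      iteratedDeriv_line hum' c v le_rfl t]
    calc |∑ p ∈ range (k + 1 + 1), ((k + 1).choose p : ℝ) * v.1 ^ p * v.2 ^ (k + 1 - p) *
            ((Dv (1, 0))^[p] ((Dv (0, 1))^[k + 1 - p] U) (c + t • v))|
        ≤ ∑ p ∈ range (k + 1 + 1), |((k + 1).choose p : ℝ) * v.1 ^ p * v.2 ^ (k + 1 - p) *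
            ((Dv (1, 0))^[p] ((Dv (0, 1))^[k + 1 - p] U) (c + t • v))| :=
          Finset.abs_sum_le_sum_abs _ _
      _ ≤ ∑ p ∈ range (k + 1 + 1), ((k + 1).choose p : ℝ) * v.1 ^ p * v.2 ^ (k + 1 - p) * M := by
          apply Finset.sum_le_sum
          intro p hp
          have hpk : p ≤ k + 1 := Nat.lt_succ_iff.mp (Finset.mem_range.mp hp)
          have hmix : (Dv (1, 0))^[p] ((Dv (0, 1))^[k + 1 - p] U) (c + t • v)
              = iteratedDeriv p (fun x' => iteratedDeriv (k + 1 - p)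
                  (fun y' => um x' y') (c + t • v).2) (c + t • v).1 := by
            rw [mixed_eq (m := k + 1) hum' (by omega) (c + t • v).1 (c + t • v).2]
          rw [abs_mul, hmix]
          have h1 : (0:ℝ) ≤ v.1 := by show (0:ℝ) ≤ xip1 - xi; linarith
          have h2 : (0:ℝ) ≤ v.2 := by show (0:ℝ) ≤ l; linarith
          have hnn : (0:ℝ) ≤ ((k + 1).choose p : ℝ) * v.1 ^ p * v.2 ^ (k + 1 - p) :=
            mul_nonneg (mul_nonneg (Nat.cast_nonneg _) (pow_nonneg h1 _)) (pow_nonneg h2 _)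
          rw [abs_of_nonneg hnn]
          exact mul_le_mul_of_nonneg_left
            (hM p (k + 1 - p) (by omega) _ (hzmem t ht).1 _ (hzmem t ht).2) hnn
      _ = M * ((xip1 - xi) + l) ^ (k + 1) := by
          have h1 : v.1 = xip1 - xi := rfl
          have h2 : v.2 = l := rfl
          rw [h1, h2, add_pow, Finset.mul_sum]
          apply Finset.sum_congr rfl
          intro p _
          ring
  have hC := taylor_bound_1d hgsm (by norm_num : (0:ℝ) < 1) hgbound
  simp only [sub_zero, one_pow, mul_one] at hC
  -- identify g 1 and the Taylor coefficients of g
  have hg1 : g 1 = um xip1 (yj + l) := by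
    show U (c + (1:ℝ) • v) = _
    have : c + (1:ℝ) • v = (xip1, yj + l) := by
      simp [hc, hv, Prod.ext_iff]
    rw [this]
  have hgsum : ∑ r ∈ range (k + 1), 1 / (r.factorial : ℝ) * iteratedDeriv r g 0
      = ∑ p ∈ Finset.range (k + 1), ∑ q ∈ Finset.range (k - p + 1),
          ((xip1 - xi) ^ p * l ^ q) / ((p.factorial : ℝ) * (q.factorial : ℝ)) *
            iteratedDeriv p (fun x' => iteratedDeriv q (fun y' => um x' y') yj) xi := by
    rw [triangle_sum k (fun p q => ((xip1 - xi) ^ p * l ^ q) /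
        ((p.factorial : ℝ) * (q.factorial : ℝ)) *
          iteratedDeriv p (fun x' => iteratedDeriv q (fun y' => um x' y') yj) xi)]
    apply Finset.sum_congr rfl
    intro n hn
    have hnk : n ≤ k := Nat.lt_succ_iff.mp (Finset.mem_range.mp hn)
    have hdg : iteratedDeriv n g 0
        = ∑ p ∈ range (n + 1), (n.choose p : ℝ) * v.1 ^ p * v.2 ^ (n - p) *
            ((Dv (1, 0))^[p] ((Dv (0, 1))^[n - p] U) (c + (0:ℝ) • v)) :=
      iteratedDeriv_line hum' c v (by omega) 0
    have hc0 : c + (0:ℝ) • v = (xi, yj) := by simp [hc]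
    rw [hdg, Finset.mul_sum]
    apply Finset.sum_congr rfl
    intro p hp
    have hpn : p ≤ n := Nat.lt_succ_iff.mp (Finset.mem_range.mp hp)
    have hmix : (Dv (1, 0))^[p] ((Dv (0, 1))^[n - p] U) (c + (0:ℝ) • v)
        = iteratedDeriv p (fun x' => iteratedDeriv (n - p) (fun y' => um x' y') yj) xi := by
      rw [hc0]
      exact (mixed_eq (m := k + 1) hum' (by omega) xi yj).symm
    rw [hmix]
    have hfact : ((n.choose p : ℕ) : ℝ) * (p.factorial : ℝ) * ((n - p).factorial : ℝ)
        = (n.factorial : ℝ) := by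
      exact_mod_cast congrArg (Nat.cast (R := ℝ))
        (Nat.choose_mul_factorial_mul_factorial hpn)
    have h1 : v.1 = xip1 - xi := rfl
    have h2 : v.2 = l := rfl
    rw [h1, h2]
    have hp0 : (0:ℝ) < (p.factorial : ℝ) := by exact_mod_cast p.factorial_pos
    have hq0 : (0:ℝ) < ((n - p).factorial : ℝ) := by exact_mod_cast (n - p).factorial_pos
    have hn0 : (0:ℝ) < (n.factorial : ℝ) := by exact_mod_cast n.factorial_pos
    field_simp
    linear_combination (
      iteratedDeriv p (fun x' => iteratedDeriv (n - p) (fun y' => um x' y') yj) xi) * hfact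
  rw [hgsum, hg1] at hC
  -- split the jump sum
  have hjump : ∑ r ∈ Finset.range (k + 1),
      (xip1 - x1s) ^ r / (r.factorial : ℝ) *
        (iteratedDeriv r (fun x' => up x' (yj + l)) x1s
          - iteratedDeriv r (fun x' => um x' (yj + l)) x1s)
      = (∑ r ∈ Finset.range (k + 1), (xip1 - x1s) ^ r / (r.factorial : ℝ) *
          iteratedDeriv r (fun x' => up x' (yj + l)) x1s)
        - ∑ r ∈ Finset.range (k + 1), (xip1 - x1s) ^ r / (r.factorial : ℝ) *
          iteratedDeriv r (fun x' => um x' (yj + l)) x1s := by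
    rw [← Finset.sum_sub_distrib]
    apply Finset.sum_congr rfl
    intro r _
    ring
  rw [hjump]
  -- final combination
  have hostA := le_trans hA hup1
  have hostB := le_trans hB hup1
  set SA := ∑ r ∈ Finset.range (k + 1), (xip1 - x1s) ^ r / (r.factorial : ℝ) *
    iteratedDeriv r (fun x' => up x' (yj + l)) x1s with hSA
  set SB := ∑ r ∈ Finset.range (k + 1), (xip1 - x1s) ^ r / (r.factorial : ℝ) *
    iteratedDeriv r (fun x' => um x' (yj + l)) x1s with hSB
  set DS := ∑ p ∈ Finset.range (k + 1), ∑ q ∈ Finset.range (k - p + 1),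
      ((xip1 - xi) ^ p * l ^ q) / ((p.factorial : ℝ) * (q.factorial : ℝ)) *
        iteratedDeriv p (fun x' => iteratedDeriv q (fun y' => um x' y') yj) xi with hDS
  have hid : up xip1 (yj + l) - DS - (SA - SB)
      = (up xip1 (yj + l) - SA) - (um xip1 (yj + l) - SB) + (um xip1 (yj + l) - DS) := by
    ring
  rw [hid]
  calc |(up xip1 (yj + l) - SA) - (um xip1 (yj + l) - SB) + (um xip1 (yj + l) - DS)|
      ≤ |(up xip1 (yj + l) - SA) - (um xip1 (yj + l) - SB)| + |um xip1 (yj + l) - DS| :=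
        abs_add_le _ _
    _ ≤ |up xip1 (yj + l) - SA| + |um xip1 (yj + l) - SB| + |um xip1 (yj + l) - DS| := by
        have := abs_sub (up xip1 (yj + l) - SA) (um xip1 (yj + l) - SB)
        linarith
    _ ≤ K * (xip1 - xi) ^ (k + 1) / ((k + 1).factorial : ℝ)
          + K * (xip1 - xi) ^ (k + 1) / ((k + 1).factorial : ℝ)
          + M * ((xip1 - xi) + l) ^ (k + 1) / ((k + 1).factorial : ℝ) := by
        have hCrw : |um xip1 (yj + l) - DS| ≤ M * ((xip1 - xi) + l) ^ (k + 1) /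
            ((k + 1).factorial : ℝ) := hC
        exact add_le_add (add_le_add hostA hostB) hCrw
    _ = 2 * K * (xip1 - xi) ^ (k + 1) / ((k + 1).factorial : ℝ)
          + M * ((xip1 - xi) + l) ^ (k + 1) / ((k + 1).factorial : ℝ) := by ring
end

section
/- Let k be a natural number, let x_i < x3s < x_{i+1} be real numbers with h = x_{i+1} − x_i and h3p = x_{i+1} − x3s, let l > 0 and y_{j−1} = y_j − l. Let u⁻, u⁺ : ℝ² → ℝ be of class C^{k+1}. Suppose K is a constant with |∂_x^{k+1} u⁻(x, y_{j−1})| ≤ K and |∂_x^{k+1} u⁺(x, y_{j−1})| ≤ K for all x ∈ [x_i, x_{i+1}], and M is a constant with |∂_x^{p} ∂_y^{q} u⁻(x,y)| ≤ M for all (x,y) ∈ [x_i, x_{i+1}] × [y_{j−1}, y_j] and all p, q ≥ 0 with p + q = k + 1. Then |u⁺(x_{i+1}, y_{j−1}) − Σ_{p=0}^{k} Σ_{q=0}^{k−p} (h^p (−l)^q)/(p! q!) · ∂_x^p ∂_y^q u⁻(x_i, y_j) − Σ_{r=0}^{k} (h3p)^r / r! · (∂_x^r u⁺(x3s, y_{j−1})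 − ∂_x^r u⁻(x3s, y_{j−1}))| ≤ 2K h^{k+1}/(k+1)! + M (h + l)^{k+1}/(k+1)!. -/
open Set Finset

private lemma iDW_eq {N m : ℕ} {f : ℝ → ℝ} (hf : ContDiff ℝ (N : ℕ) f) (hm : m ≤ N)
    {s : Set ℝ} (hs : UniqueDiffOn ℝ s) {x : ℝ} (hx : x ∈ s) :
    iteratedDerivWithin m f s x = iteratedDeriv m f x := by
  have hf' : ContDiff ℝ ((N : ℕ∞) : WithTop ℕ∞) f := by exact_mod_cast hf
  have h1 : HasFTaylorSeriesUpToOn ((N : ℕ∞) : WithTop ℕ∞) f (ftaylorSeries ℝ f) s :=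
    (contDiff_iff_ftaylorSeries.mp hf').hasFTaylorSeriesUpToOn s
  have h2 := h1.eq_iteratedFDerivWithin_of_uniqueDiffOn (m := m) (by exact_mod_cast hm) hs hx
  simp only [iteratedDerivWithin, iteratedDeriv, ← h2]
  rfl

private lemma taylor_bound_lt {f : ℝ → ℝ} {n : ℕ} {a b C : ℝ} (hab : a < b)
    (hf : ContDiff ℝ ((n + 1 : ℕ)) f)
    (hC : ∀ t ∈ Set.Icc a b, |iteratedDeriv (n + 1) f t| ≤ C) :
    |f b - ∑ i ∈ Finset.range (n + 1), (b - a) ^ i / (i.factorial : ℝ) * iteratedDeriv i f a|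
      ≤ C * (b - a) ^ (n + 1) / ((n + 1).factorial : ℝ) := by
  have hu : UniqueDiffOn ℝ (Set.Icc a b) := uniqueDiffOn_Icc hab
  have hmem : ∀ i, i ≤ n + 1 → ∀ x ∈ Set.Icc a b,
      iteratedDerivWithin i f (Set.Icc a b) x = iteratedDeriv i f x :=
    fun i hi x hx => iDW_eq hf hi hu hx
  have hco : ContDiffOn ℝ (n : ℕ) f (Set.Icc a b) :=
    (hf.of_le (by exact_mod_cast Nat.le_succ n)).contDiffOn
  have hdiff : Differentiable ℝ (iteratedDeriv n f) :=
    hf.differentiable_iteratedDeriv n (by exact_mod_cast Nat.lt_succ_self n)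
  have hf' : DifferentiableOn ℝ (iteratedDerivWithin n f (Set.Icc a b)) (Set.Ioo a b) :=
    hdiff.differentiableOn.congr fun x hx =>
      hmem n (Nat.le_succ n) x (Set.Ioo_subset_Icc_self hx)
  obtain ⟨x', hx', hEq⟩ := taylor_mean_remainder_lagrange hab.ne
    (by rwa [Set.uIcc_of_le hab.le]) (by rwa [Set.uIcc_of_le hab.le, Set.uIoo_of_le hab.le])
  rw [Set.uIcc_of_le hab.le] at hEq
  rw [Set.uIoo_of_le hab.le] at hx'
  have hT : taylorWithinEval f n (Set.Icc a b) a b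
      = ∑ i ∈ Finset.range (n + 1), (b - a) ^ i / (i.factorial : ℝ) * iteratedDeriv i f a := by
    rw [taylor_within_apply]
    refine Finset.sum_congr rfl fun i hi => ?_
    rw [hmem i (by simp only [Finset.mem_range] at hi; omega) a ⟨le_refl a, hab.le⟩]
    rw [smul_eq_mul]; ring
  have hx'' : x' ∈ Set.Icc a b := Set.Ioo_subset_Icc_self hx'
  rw [← hT, hEq, hmem (n + 1) le_rfl x' hx'']
  have h1 : (0:ℝ) < (b - a) ^ (n + 1) := pow_pos (sub_pos.mpr hab) _
  have h2 : (0:ℝ) < ((n + 1).factorial : ℝ) := by positivity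
  rw [abs_div, abs_mul, abs_of_pos h1, abs_of_pos h2]
  gcongr
  exact hC x' hx''

private lemma taylor_bound {f : ℝ → ℝ} {n : ℕ} {a b C : ℝ}
    (hf : ContDiff ℝ ((n + 1 : ℕ)) f)
    (hC : ∀ t ∈ Set.uIcc a b, |iteratedDeriv (n + 1) f t| ≤ C) :
    |f b - ∑ i ∈ Finset.range (n + 1), (b - a) ^ i / (i.factorial : ℝ) * iteratedDeriv i f a|
      ≤ C * |b - a| ^ (n + 1) / ((n + 1).factorial : ℝ) := by
  rcases lt_trichotomy a b with hab | rfl | hab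
  · have := taylor_bound_lt hab hf (fun t ht => hC t (by rwa [Set.uIcc_of_le hab.le]))
    rwa [abs_of_pos (sub_pos.mpr hab)]
  · have hC0 : 0 ≤ C := le_trans (abs_nonneg _) (hC a (Set.left_mem_uIcc))
    have hs : ∑ i ∈ Finset.range (n + 1), (a - a) ^ i / (i.factorial : ℝ) * iteratedDeriv i f a
        = f a := by
      rw [sub_self, Finset.sum_eq_single 0]
      · simp
      · intro b hb hb0; simp [zero_pow hb0]
      · simp
    rw [hs, sub_self, abs_zero]
    positivity
  · -- b < a : reflect
    have hgc : ContDiff ℝ ((n + 1 : ℕ)) (fun t => f (a + b - t)) :=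
      hf.comp (contDiff_const.sub contDiff_id)
    have hgf : ∀ (i : ℕ) (t : ℝ), iteratedDeriv i (fun t => f (a + b - t)) t
        = (-1:ℝ) ^ i * iteratedDeriv i f (a + b - t) := by
      intro i t
      have h0 : (fun t : ℝ => f (a + b - t)) = (fun z : ℝ => f ((a + b) + z)) ∘ (fun t : ℝ => -t) := by
        funext s; simp [Function.comp]; ring_nf
      rw [h0]
      have := iteratedDeriv_comp_neg i (fun z : ℝ => f ((a + b) + z)) t
      rw [show ((fun z : ℝ => f ((a+b) + z)) ∘ (fun t : ℝ => -t)) = (fun x : ℝ => (fun z : ℝ => f ((a+b)+z)) (-x)) from rfl, this,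
        iteratedDeriv_comp_const_add]
      rw [smul_eq_mul]
      ring_nf
    have hbound : ∀ t ∈ Set.Icc b a, |iteratedDeriv (n + 1) (fun t => f (a + b - t)) t| ≤ C := by
      intro t ht
      rw [hgf, abs_mul, abs_pow, abs_neg, abs_one, one_pow, one_mul]
      refine hC _ ?_
      rw [Set.uIcc_of_ge hab.le]
      exact ⟨by linarith [ht.2], by linarith [ht.1]⟩
    have key := taylor_bound_lt hab hgc hbound
    have e1 : a + b - a = b := by ring
    have e2 : ∑ i ∈ Finset.range (n + 1),
        (a - b) ^ i / (i.factorial : ℝ) * iteratedDeriv i (fun t => f (a + b - t)) b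
        = ∑ i ∈ Finset.range (n + 1), (b - a) ^ i / (i.factorial : ℝ) * iteratedDeriv i f a := by
      refine Finset.sum_congr rfl fun i hi => ?_
      rw [hgf]
      have e3 : a + b - b = a := by ring
      rw [e3]
      have e4 : (-1:ℝ)^i * (a - b)^i = (b - a)^i := by
        rw [← mul_pow]; ring_nf
      calc (a - b) ^ i / (i.factorial : ℝ) * ((-1:ℝ) ^ i * iteratedDeriv i f a)
          = ((-1:ℝ)^i * (a - b)^i) / (i.factorial : ℝ) * iteratedDeriv i f a := by ring
        _ = (b - a) ^ i / (i.factorial : ℝ) * iteratedDeriv i f a := by rw [e4]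
    rw [e1, e2] at key
    have e5 : |b - a| = a - b := by
      rw [abs_sub_comm]; exact abs_of_pos (by linarith)
    rw [e5]
    exact key

private lemma partial_y_contDiff (F : ℝ × ℝ → ℝ) (N : ℕ) (hF : ContDiff ℝ (N : ℕ) F) :
    ∀ q, q ≤ N → ContDiff ℝ ((N - q : ℕ))
      (fun p : ℝ × ℝ => iteratedDeriv q (fun y' => F (p.1, y')) p.2) := by
  intro q
  induction q with
  | zero =>
    intro _
    simp only [iteratedDeriv_zero, Nat.sub_zero]
    exact hF
  | succ q IH =>
    intro hq
    have hD := IH (Nat.le_of_succ_le hq)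
    set D : ℝ × ℝ → ℝ := fun p : ℝ × ℝ => iteratedDeriv q (fun y' => F (p.1, y')) p.2 with hDdef
    have hDd : Differentiable ℝ D :=
      hD.differentiable (by exact_mod_cast (show N - q ≠ 0 by omega))
    have heq : (fun p : ℝ × ℝ => iteratedDeriv (q + 1) (fun y' => F (p.1, y')) p.2)
        = fun p : ℝ × ℝ => fderiv ℝ D p ((0:ℝ), (1:ℝ)) := by
      funext p
      rw [iteratedDeriv_succ]
      have h2 : HasDerivAt (fun y' => D (p.1, y')) (fderiv ℝ D (p.1, p.2) ((0:ℝ),(1:ℝ))) p.2 :=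
        (hDd (p.1, p.2)).hasFDerivAt.comp_hasDerivAt p.2
          ((hasDerivAt_const p.2 p.1).prodMk (hasDerivAt_id p.2))
      have h3 : deriv (fun y' => iteratedDeriv q (fun y'' => F (p.1, y'')) y') p.2
          = deriv (fun y' => D (p.1, y')) p.2 := rfl
      rw [h3, h2.deriv]
    rw [heq]
    have hf' : ContDiff ℝ ((N - (q + 1) : ℕ)) (fderiv ℝ D) :=
      hD.fderiv_right (by exact_mod_cast (show N - (q+1) + 1 ≤ N - q by omega))
    exact ((ContinuousLinearMap.apply ℝ ℝ ((0:ℝ),(1:ℝ))).contDiff).comp hf'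

private lemma sum_swap_tri (n : ℕ) (f : ℕ → ℕ → ℝ) :
    ∑ p ∈ Finset.range (n + 1), ∑ q ∈ Finset.range (n - p + 1), f p q
      = ∑ q ∈ Finset.range (n + 1), ∑ p ∈ Finset.range (n - q + 1), f p q := by
  rw [Finset.sum_sigma', Finset.sum_sigma']
  refine Finset.sum_nbij' (fun x => ⟨x.2, x.1⟩) (fun x => ⟨x.2, x.1⟩) ?_ ?_ ?_ ?_ ?_
  · intro a ha; simp only [Finset.mem_sigma, Finset.mem_range] at *; omega
  · intro a ha; simp only [Finset.mem_sigma, Finset.mem_range] at *; omega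
  · intro a _; rfl
  · intro a _; rfl
  · intro a _; rfl

/-- Remark 2: jump-corrected two-dimensional Taylor expansion for an irregular point
whose grid line parallel to the x-axis, one level below the stencil center, crosses
the interface at `(x3s, yjm1)`. -/
theorem jump_corrected_taylor_x_below
    (k : ℕ) (xi x3s xip1 : ℝ) (hx1 : xi < x3s) (hx2 : x3s < xip1)
    (h : ℝ) (hh : h = xip1 - xi)
    (h3p : ℝ) (hh3p : h3p = xip1 - x3s)
    (l : ℝ) (hl : 0 < l) (yj yjm1 : ℝ) (hy : yjm1 = yj - l)
    (um up : ℝ → ℝ → ℝ)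
    (hum : ContDiff ℝ (k + 1) (fun q : ℝ × ℝ => um q.1 q.2))
    (hup : ContDiff ℝ (k + 1) (fun q : ℝ × ℝ => up q.1 q.2))
    (K M : ℝ)
    (hKm : ∀ x ∈ Set.Icc xi xip1,
      |iteratedDeriv (k + 1) (fun x' => um x' yjm1) x| ≤ K)
    (hKp : ∀ x ∈ Set.Icc xi xip1,
      |iteratedDeriv (k + 1) (fun x' => up x' yjm1) x| ≤ K)
    (hM : ∀ p q : ℕ, p + q = k + 1 → ∀ x ∈ Set.Icc xi xip1, ∀ y ∈ Set.Icc yjm1 yj,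
      |iteratedDeriv p (fun x' => iteratedDeriv q (fun y' => um x' y') y) x| ≤ M) :
    |up xip1 yjm1
      - ∑ p ∈ Finset.range (k + 1), ∑ q ∈ Finset.range (k - p + 1),
          (h ^ p * (-l) ^ q) / ((p.factorial : ℝ) * (q.factorial : ℝ)) *
            iteratedDeriv p (fun x' => iteratedDeriv q (fun y' => um x' y') yj) xi
      - ∑ r ∈ Finset.range (k + 1),
          h3p ^ r / (r.factorial : ℝ) *
            (iteratedDeriv r (fun x' => up x' yjm1) x3s
              - iteratedDeriv r (fun x' => um x' yjm1) x3s)|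
    ≤ 2 * K * h ^ (k + 1) / ((k + 1).factorial : ℝ)
      + M * (h + l) ^ (k + 1) / ((k + 1).factorial : ℝ) := by
  subst hh hh3p hy
  have hyml : yj - l ≤ yj := by linarith
  have hxi1 : xi < xip1 := lt_trans hx1 hx2
  have hK0 : 0 ≤ K := le_trans (abs_nonneg _) (hKp xip1 ⟨hxi1.le, le_rfl⟩)
  have humN : ContDiff ℝ ((k + 1 : ℕ)) (fun q : ℝ × ℝ => um q.1 q.2) := by exact_mod_cast hum
  have hupN : ContDiff ℝ ((k + 1 : ℕ)) (fun q : ℝ × ℝ => up q.1 q.2) := by exact_mod_cast hup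
  have hupx : ContDiff ℝ ((k + 1 : ℕ)) (fun x' => up x' (yj - l)) :=
    hupN.comp (contDiff_id.prodMk contDiff_const)
  have humx : ContDiff ℝ ((k + 1 : ℕ)) (fun x' => um x' (yj - l)) :=
    humN.comp (contDiff_id.prodMk contDiff_const)
  have hsubIcc : Set.uIcc x3s xip1 ⊆ Set.Icc xi xip1 := by
    rw [Set.uIcc_of_le hx2.le]
    exact Set.Icc_subset_Icc hx1.le le_rfl
  -- Taylor remainder for u⁺ in x on [x3s, xip1]
  have hA := taylor_bound (n := k) (a := x3s) (b := xip1) (C := K)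
    (f := fun x' => up x' (yj - l)) hupx (fun t ht => hKp t (hsubIcc ht))
  have hB := taylor_bound (n := k) (a := x3s) (b := xip1) (C := K)
    (f := fun x' => um x' (yj - l)) humx (fun t ht => hKm t (hsubIcc ht))
  rw [abs_of_pos (sub_pos.mpr hx2)] at hA hB
  have hA' : |up xip1 (yj - l) - ∑ i ∈ Finset.range (k + 1),
      (xip1 - x3s) ^ i / (i.factorial : ℝ) * iteratedDeriv i (fun x' => up x' (yj - l)) x3s|
      ≤ K * (xip1 - xi) ^ (k + 1) / ((k + 1).factorial : ℝ) := by
    refine le_trans hA ?_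
    gcongr <;> linarith
  have hB' : |um xip1 (yj - l) - ∑ i ∈ Finset.range (k + 1),
      (xip1 - x3s) ^ i / (i.factorial : ℝ) * iteratedDeriv i (fun x' => um x' (yj - l)) x3s|
      ≤ K * (xip1 - xi) ^ (k + 1) / ((k + 1).factorial : ℝ) := by
    refine le_trans hB ?_
    gcongr <;> linarith
  -- Taylor in y at (xip1, yj), downward
  have hstep1 := taylor_bound (n := k) (a := yj) (b := yj - l) (C := M)
    (f := fun y' => um xip1 y') (humN.comp (contDiff_const.prodMk contDiff_id))
    (fun t ht => by
      have ht' : t ∈ Set.Icc (yj - l) yj := by rwa [Set.uIcc_of_ge hyml] at ht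
      simpa using hM 0 (k + 1) (by omega) xip1 ⟨hxi1.le, le_rfl⟩ t ht')
  rw [show yj - l - yj = -l from by ring, abs_neg, abs_of_pos hl] at hstep1
  have hstep1' : |um xip1 (yj - l) - ∑ q ∈ Finset.range (k + 1),
      (-l) ^ q / (q.factorial : ℝ) * iteratedDeriv q (fun y' => um xip1 y') yj|
      ≤ M * l ^ (k + 1) / ((k + 1).factorial : ℝ) := hstep1
  -- Smoothness of partial y-derivatives in x
  have hDq : ∀ q, q ≤ k → ContDiff ℝ ((k - q + 1 : ℕ))
      (fun x => iteratedDeriv q (fun y' => um x y') yj) := by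
    intro q hq
    have h1 : ContDiff ℝ ((k + 1 - q : ℕ))
        (fun x : ℝ => iteratedDeriv q (fun y' => um x y') yj) :=
      (partial_y_contDiff _ (k + 1) humN q (by omega)).comp
        (contDiff_id.prodMk contDiff_const)
    rw [show k - q + 1 = k + 1 - q from by omega]
    exact h1
  -- Taylor in x for each partial y-derivative
  have hstep2 : ∀ q, q ≤ k →
      |iteratedDeriv q (fun y' => um xip1 y') yj
        - ∑ p ∈ Finset.range (k - q + 1), (xip1 - xi) ^ p / (p.factorial : ℝ) *
            iteratedDeriv p (fun x' => iteratedDeriv q (fun y' => um x' y') yj) xi|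
      ≤ M * (xip1 - xi) ^ (k - q + 1) / ((k - q + 1).factorial : ℝ) := by
    intro q hq
    have hb := taylor_bound (n := k - q) (a := xi) (b := xip1) (C := M)
      (f := fun x => iteratedDeriv q (fun y' => um x y') yj) (hDq q hq)
      (fun t ht => by
        have ht' : t ∈ Set.Icc xi xip1 := by rwa [Set.uIcc_of_le hxi1.le] at ht
        exact hM (k - q + 1) q (by omega) t ht' yj ⟨hyml, le_rfl⟩)
    rwa [abs_of_pos (sub_pos.mpr hxi1)] at hb
  -- Swap double sum
  have hDS := sum_swap_tri k (fun p q =>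
    ((xip1 - xi) ^ p * (-l) ^ q) / ((p.factorial : ℝ) * (q.factorial : ℝ)) *
      iteratedDeriv p (fun x' => iteratedDeriv q (fun y' => um x' y') yj) xi)
  have hDS' : (∑ p ∈ Finset.range (k + 1), ∑ q ∈ Finset.range (k - p + 1),
        ((xip1 - xi) ^ p * (-l) ^ q) / ((p.factorial : ℝ) * (q.factorial : ℝ)) *
          iteratedDeriv p (fun x' => iteratedDeriv q (fun y' => um x' y') yj) xi)
      = ∑ q ∈ Finset.range (k + 1), (-l) ^ q / (q.factorial : ℝ) *
          ∑ p ∈ Finset.range (k - q + 1), (xip1 - xi) ^ p / (p.factorial : ℝ) *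
            iteratedDeriv p (fun x' => iteratedDeriv q (fun y' => um x' y') yj) xi := by
    rw [hDS]
    refine Finset.sum_congr rfl fun q _ => ?_
    rw [Finset.mul_sum]
    exact Finset.sum_congr rfl fun p _ => by ring
  -- Bound for the 2D Taylor remainder
  have hE3 : |um xip1 (yj - l)
      - ∑ p ∈ Finset.range (k + 1), ∑ q ∈ Finset.range (k - p + 1),
          ((xip1 - xi) ^ p * (-l) ^ q) / ((p.factorial : ℝ) * (q.factorial : ℝ)) *
            iteratedDeriv p (fun x' => iteratedDeriv q (fun y' => um x' y') yj) xi|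
      ≤ M * l ^ (k + 1) / ((k + 1).factorial : ℝ)
        + ∑ q ∈ Finset.range (k + 1), l ^ q / (q.factorial : ℝ) *
            (M * (xip1 - xi) ^ (k - q + 1) / ((k - q + 1).factorial : ℝ)) := by
    have h1 : ∑ q ∈ Finset.range (k + 1), (-l) ^ q / (q.factorial : ℝ) *
          (iteratedDeriv q (fun y' => um xip1 y') yj
            - ∑ p ∈ Finset.range (k - q + 1), (xip1 - xi) ^ p / (p.factorial : ℝ) *
                iteratedDeriv p (fun x' => iteratedDeriv q (fun y' => um x' y') yj) xi)
        = (∑ q ∈ Finset.range (k + 1), (-l) ^ q / (q.factorial : ℝ) *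
            iteratedDeriv q (fun y' => um xip1 y') yj)
          - ∑ p ∈ Finset.range (k + 1), ∑ q ∈ Finset.range (k - p + 1),
              ((xip1 - xi) ^ p * (-l) ^ q) / ((p.factorial : ℝ) * (q.factorial : ℝ)) *
                iteratedDeriv p (fun x' => iteratedDeriv q (fun y' => um x' y') yj) xi := by
      rw [hDS', ← Finset.sum_sub_distrib]
      exact Finset.sum_congr rfl fun q _ => mul_sub _ _ _
    have h2 : um xip1 (yj - l)
        - ∑ p ∈ Finset.range (k + 1), ∑ q ∈ Finset.range (k - p + 1),
            ((xip1 - xi) ^ p * (-l) ^ q) / ((p.factorial : ℝ) * (q.factorial : ℝ)) *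
              iteratedDeriv p (fun x' => iteratedDeriv q (fun y' => um x' y') yj) xi
        = (um xip1 (yj - l) - ∑ q ∈ Finset.range (k + 1),
            (-l) ^ q / (q.factorial : ℝ) * iteratedDeriv q (fun y' => um xip1 y') yj)
          + ∑ q ∈ Finset.range (k + 1), (-l) ^ q / (q.factorial : ℝ) *
              (iteratedDeriv q (fun y' => um xip1 y') yj
                - ∑ p ∈ Finset.range (k - q + 1), (xip1 - xi) ^ p / (p.factorial : ℝ) *
                    iteratedDeriv p (fun x' => iteratedDeriv q (fun y' => um x' y') yj) xi) := by
      rw [h1]; ring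
    rw [h2]
    refine le_trans (abs_add_le _ _) (add_le_add hstep1' ?_)
    refine le_trans (Finset.abs_sum_le_sum_abs _ _) (Finset.sum_le_sum fun q hq => ?_)
    have hq' : q ≤ k := by
      have := Finset.mem_range.mp hq; omega
    rw [abs_mul, abs_div, abs_pow, abs_neg, abs_of_pos hl, Nat.abs_cast]
    exact mul_le_mul_of_nonneg_left (hstep2 q hq') (by positivity)
  -- Binomial identity for the total 2D bound
  have hbin : M * l ^ (k + 1) / ((k + 1).factorial : ℝ)
      + ∑ q ∈ Finset.range (k + 1), l ^ q / (q.factorial : ℝ) *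
          (M * (xip1 - xi) ^ (k - q + 1) / ((k - q + 1).factorial : ℝ))
      = M * ((xip1 - xi) + l) ^ (k + 1) / ((k + 1).factorial : ℝ) := by
    have hstep : ∀ q ∈ Finset.range (k + 1),
        l ^ q / (q.factorial : ℝ) *
          (M * (xip1 - xi) ^ (k - q + 1) / ((k - q + 1).factorial : ℝ))
        = M * (l ^ q * (xip1 - xi) ^ (k + 1 - q) * (((k + 1).choose q : ℕ) : ℝ))
            / ((k + 1).factorial : ℝ) := by
      intro q hq
      have hq' : q ≤ k := by
        have := Finset.mem_range.mp hq; omega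
      have e1 : k - q + 1 = k + 1 - q := by omega
      have hc : (((k + 1).choose q : ℕ) : ℝ) * (q.factorial : ℝ) * ((k + 1 - q).factorial : ℝ)
          = (((k + 1).factorial : ℕ) : ℝ) := by
        exact_mod_cast congrArg (Nat.cast (R := ℝ))
          (Nat.choose_mul_factorial_mul_factorial (show q ≤ k + 1 by omega))
      rw [e1]
      have hq0 : (q.factorial : ℝ) ≠ 0 := by positivity
      have hkq0 : ((k + 1 - q).factorial : ℝ) ≠ 0 := by positivity
      have hk0 : (((k + 1).factorial : ℝ)) ≠ 0 := by positivity
      field_simp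
      linear_combination (-(M * (xip1 - xi) ^ (k + 1 - q))) * hc
    rw [Finset.sum_congr rfl hstep]
    have hexp : (l + (xip1 - xi)) ^ (k + 1)
        = (∑ q ∈ Finset.range (k + 1),
            l ^ q * (xip1 - xi) ^ (k + 1 - q) * (((k + 1).choose q : ℕ) : ℝ)) + l ^ (k + 1) := by
      rw [add_pow l (xip1 - xi) (k + 1), Finset.sum_range_succ,
        Nat.choose_self, Nat.sub_self]
      push_cast
      ring
    have hsum : ∑ q ∈ Finset.range (k + 1),
        M * (l ^ q * (xip1 - xi) ^ (k + 1 - q) * (((k + 1).choose q : ℕ) : ℝ))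
          / ((k + 1).factorial : ℝ)
        = M * (∑ q ∈ Finset.range (k + 1),
            l ^ q * (xip1 - xi) ^ (k + 1 - q) * (((k + 1).choose q : ℕ) : ℝ))
          / ((k + 1).factorial : ℝ) := by
      rw [Finset.mul_sum, Finset.sum_div]
    rw [hsum, show (xip1 - xi) + l = l + (xip1 - xi) from by ring, hexp]
    ring
  -- Split the jump sum
  have hS2 : ∑ r ∈ Finset.range (k + 1),
      (xip1 - x3s) ^ r / (r.factorial : ℝ) *
        (iteratedDeriv r (fun x' => up x' (yj - l)) x3s
          - iteratedDeriv r (fun x' => um x' (yj - l)) x3s)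
      = (∑ r ∈ Finset.range (k + 1), (xip1 - x3s) ^ r / (r.factorial : ℝ) *
           iteratedDeriv r (fun x' => up x' (yj - l)) x3s)
        - ∑ r ∈ Finset.range (k + 1), (xip1 - x3s) ^ r / (r.factorial : ℝ) *
           iteratedDeriv r (fun x' => um x' (yj - l)) x3s := by
    rw [← Finset.sum_sub_distrib]
    exact Finset.sum_congr rfl fun r _ => mul_sub _ _ _
  -- Decompose the main expression
  have hkey : up xip1 (yj - l)
      - (∑ p ∈ Finset.range (k + 1), ∑ q ∈ Finset.range (k - p + 1),
          ((xip1 - xi) ^ p * (-l) ^ q) / ((p.factorial : ℝ) * (q.factorial : ℝ)) *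
            iteratedDeriv p (fun x' => iteratedDeriv q (fun y' => um x' y') yj) xi)
      - (∑ r ∈ Finset.range (k + 1), (xip1 - x3s) ^ r / (r.factorial : ℝ) *
          (iteratedDeriv r (fun x' => up x' (yj - l)) x3s
            - iteratedDeriv r (fun x' => um x' (yj - l)) x3s))
      = (up xip1 (yj - l) - ∑ i ∈ Finset.range (k + 1),
          (xip1 - x3s) ^ i / (i.factorial : ℝ) * iteratedDeriv i (fun x' => up x' (yj - l)) x3s)
        + ((∑ i ∈ Finset.range (k + 1),
            (xip1 - x3s) ^ i / (i.factorial : ℝ) * iteratedDeriv i (fun x' => um x' (yj - l)) x3s)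
           - um xip1 (yj - l))
        + (um xip1 (yj - l)
          - ∑ p ∈ Finset.range (k + 1), ∑ q ∈ Finset.range (k - p + 1),
              ((xip1 - xi) ^ p * (-l) ^ q) / ((p.factorial : ℝ) * (q.factorial : ℝ)) *
                iteratedDeriv p (fun x' => iteratedDeriv q (fun y' => um x' y') yj) xi) := by
    rw [hS2]; ring
  rw [hkey]
  refine le_trans (abs_add_three _ _ _) ?_
  have hB'' : |(∑ i ∈ Finset.range (k + 1),
      (xip1 - x3s) ^ i / (i.factorial : ℝ) * iteratedDeriv i (fun x' => um x' (yj - l)) x3s)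
      - um xip1 (yj - l)| ≤ K * (xip1 - xi) ^ (k + 1) / ((k + 1).factorial : ℝ) := by
    rw [abs_sub_comm]; exact hB'
  have hE3' : |um xip1 (yj - l)
      - ∑ p ∈ Finset.range (k + 1), ∑ q ∈ Finset.range (k - p + 1),
          ((xip1 - xi) ^ p * (-l) ^ q) / ((p.factorial : ℝ) * (q.factorial : ℝ)) *
            iteratedDeriv p (fun x' => iteratedDeriv q (fun y' => um x' y') yj) xi|
      ≤ M * ((xip1 - xi) + l) ^ (k + 1) / ((k + 1).factorial : ℝ) := by
    rw [← hbin]; exact hE3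
  refine le_trans (add_le_add (add_le_add hA' hB'') hE3') (le_of_eq ?_)
  ring
end

section
/- Let δ > 0 and h > 0, let a be a real number, and let f : ℝ → ℝ be of class C³ on the interval [a, a + δ + h], with |f'''(x)| ≤ M₃ for all x in [a, a + δ + h]. Then | (2/(h δ (δ + h))) · ( h f(a) − (δ + h) f(a + δ) + δ f(a + δ + h) ) − f''(a) | ≤ (δ + h) · M₃. -/
open Set

/-- Error bound for the one-sided finite-difference approximation of the second
derivative on the nonuniform three-point stencil `{a, a + δ, a + δ + h}`. -/
theorem one_sided_second_derivative_nonuniform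
    (δ h a : ℝ) (hδ : 0 < δ) (hh : 0 < h)
    (f : ℝ → ℝ) (hf : ContDiffOn ℝ 3 f (Set.Icc a (a + δ + h)))
    (M₃ : ℝ)
    (hM : ∀ x ∈ Set.Icc a (a + δ + h),
      |iteratedDerivWithin 3 f (Set.Icc a (a + δ + h)) x| ≤ M₃) :
    |(2 / (h * δ * (δ + h))) *
        (h * f a - (δ + h) * f (a + δ) + δ * f (a + δ + h))
      - iteratedDerivWithin 2 f (Set.Icc a (a + δ + h)) a|
    ≤ (δ + h) * M₃ := by
  have hδh : 0 < δ + h := by linarith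
  set b := a + δ + h with hbdef
  have hab : a < b := by simp only [hbdef]; linarith
  have hax1 : a < a + δ := by linarith
  have hx1b : a + δ < b := by simp only [hbdef]; linarith
  set s : Set ℝ := Set.Icc a b with hsdef
  have hs : UniqueDiffOn ℝ s := uniqueDiffOn_Icc hab
  have has : a ∈ s := ⟨le_refl a, hab.le⟩
  set f1 : ℝ → ℝ := derivWithin f s with hf1def
  set f2 : ℝ → ℝ := derivWithin f1 s with hf2def
  have h1 : ContDiffOn ℝ 2 f1 s := hf.derivWithin hs (by norm_num)
  have h2 : ContDiffOn ℝ 1 f2 s := h1.derivWithin hs (by norm_num)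
  -- identify iterated derivatives
  have hf2eq : ∀ x ∈ s, iteratedDerivWithin 2 f s x = f2 x := by
    intro x hx
    rw [show (2:ℕ) = 1 + 1 from rfl, iteratedDerivWithin_succ',
      iteratedDerivWithin_one]
  have hf3eq : ∀ x ∈ s, iteratedDerivWithin 3 f s x = derivWithin f2 s x := by
    intro x hx
    rw [show (3:ℕ) = 2 + 1 from rfl, iteratedDerivWithin_succ',
      show (2:ℕ) = 1 + 1 from rfl, iteratedDerivWithin_succ',
      iteratedDerivWithin_one]
  -- derivatives at interior points
  have hIoo : Set.Ioo a b ⊆ s := Set.Ioo_subset_Icc_self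
  have hfd : ∀ x ∈ Set.Ioo a b, HasDerivAt f (f1 x) x := by
    intro x hx
    have hdA : DifferentiableAt ℝ f x :=
      ((hf.differentiableOn (by norm_num)) x (hIoo hx)).differentiableAt
        (Icc_mem_nhds hx.1 hx.2)
    have : f1 x = deriv f x := hdA.derivWithin (hs x (hIoo hx))
    rw [this]; exact hdA.hasDerivAt
  have hf1d : ∀ x ∈ Set.Ioo a b, HasDerivAt f1 (f2 x) x := by
    intro x hx
    have hdA : DifferentiableAt ℝ f1 x :=
      ((h1.differentiableOn (by norm_num)) x (hIoo hx)).differentiableAt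
        (Icc_mem_nhds hx.1 hx.2)
    have : f2 x = deriv f1 x := hdA.derivWithin (hs x (hIoo hx))
    rw [this]; exact hdA.hasDerivAt
  -- auxiliary function
  set c : ℝ := 2 / (h * δ * (δ + h)) *
      (h * f a - (δ + h) * f (a + δ) + δ * f b) with hcdef
  set m : ℝ := (f (a + δ) - f a) / δ with hmdef
  set g : ℝ → ℝ := fun x => f x - f a - m * (x - a) - c / 2 * ((x - a) * (x - (a + δ)))
    with hgdef
  have hga : g a = 0 := by simp [hgdef]
  have hgx1 : g (a + δ) = 0 := by
    simp only [hgdef, hmdef]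
    field_simp
    ring
  have hgb : g b = 0 := by
    simp only [hgdef, hmdef, hcdef, hbdef]
    field_simp
    ring
  have hgc : ContinuousOn g s := by
    have hc2 : Continuous fun x : ℝ =>
        f a + m * (x - a) + c / 2 * ((x - a) * (x - (a + δ))) := by fun_prop
    exact (hf.continuousOn.sub hc2.continuousOn).congr fun x _ => by
      simp only [hgdef, Pi.sub_apply]; ring
  have hgd : ∀ x ∈ Set.Ioo a b, HasDerivAt g
      (f1 x - m - c / 2 * (2 * x - 2 * a - δ)) x := by
    intro x hx
    have hq : HasDerivAt (fun x : ℝ => (x - a) * (x - (a + δ)))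
        (2 * x - 2 * a - δ) x := by
      have := ((hasDerivAt_id x).sub_const a).mul ((hasDerivAt_id x).sub_const (a + δ))
      exact this.congr_deriv (by simp only [id_eq]; ring)
    have hlin : HasDerivAt (fun x : ℝ => m * (x - a)) m x := by
      simpa using ((hasDerivAt_id x).sub_const a).const_mul m
    exact (((hfd x hx).sub_const (f a)).sub hlin).sub (hq.const_mul (c / 2))
  -- Rolle twice
  obtain ⟨y₁, hy₁, hgy₁⟩ := exists_hasDerivAt_eq_zero hax1
    (hgc.mono (Icc_subset_Icc le_rfl hx1b.le)) (hga.trans hgx1.symm)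
    (fun x hx => hgd x (Ioo_subset_Ioo le_rfl hx1b.le hx))
  obtain ⟨y₂, hy₂, hgy₂⟩ := exists_hasDerivAt_eq_zero hx1b
    (hgc.mono (Icc_subset_Icc hax1.le le_rfl)) (hgx1.trans hgb.symm)
    (fun x hx => hgd x (Ioo_subset_Ioo hax1.le le_rfl hx))
  have hy₁ab : y₁ ∈ Set.Ioo a b := Ioo_subset_Ioo le_rfl hx1b.le hy₁
  have hy₂ab : y₂ ∈ Set.Ioo a b := Ioo_subset_Ioo hax1.le le_rfl hy₂
  have hy₁₂ : y₁ < y₂ := hy₁.2.trans hy₂.1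
  set G : ℝ → ℝ := fun x => f1 x - m - c / 2 * (2 * x - 2 * a - δ) with hGdef
  have hGc : ContinuousOn G s := by
    have hc2 : Continuous fun x : ℝ => m + c / 2 * (2 * x - 2 * a - δ) := by fun_prop
    exact (h1.continuousOn.sub hc2.continuousOn).congr fun x _ => by
      simp only [hGdef, Pi.sub_apply]; ring
  have hGd : ∀ x ∈ Set.Ioo a b, HasDerivAt G (f2 x - c) x := by
    intro x hx
    have : HasDerivAt (fun x : ℝ => c / 2 * (2 * x - 2 * a - δ)) c x := by
      have h0 : HasDerivAt (fun x : ℝ => 2 * x - 2 * a - δ) 2 x := by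
        simpa using (((hasDerivAt_id x).const_mul 2).sub_const (2 * a)).sub_const δ
      have := h0.const_mul (c / 2)
      exact this.congr_deriv (by ring)
    exact ((hf1d x hx).sub_const m).sub this
  obtain ⟨ξ, hξ, hGξ⟩ := exists_hasDerivAt_eq_zero hy₁₂
    (hGc.mono (Icc_subset_Icc (le_of_lt hy₁ab.1) (le_of_lt hy₂ab.2)))
    (hgy₁.trans hgy₂.symm)
    (fun x hx => hGd x ⟨hy₁ab.1.trans hx.1, hx.2.trans hy₂ab.2⟩)
  have hξab : ξ ∈ Set.Ioo a b := ⟨hy₁ab.1.trans hξ.1, hξ.2.trans hy₂ab.2⟩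
  have hceq : c = f2 ξ := by linarith [hGξ]
  -- MVT bound on f2
  have hM3 : ∀ x ∈ s, ‖derivWithin f2 s x‖ ≤ M₃ := by
    intro x hx
    rw [Real.norm_eq_abs, ← hf3eq x hx]
    exact hM x hx
  have hMnn : 0 ≤ M₃ := le_trans (abs_nonneg _) (hM a has)
  have hmvt : ‖f2 ξ - f2 a‖ ≤ M₃ * ‖ξ - a‖ :=
    Convex.norm_image_sub_le_of_norm_derivWithin_le
      (h2.differentiableOn (by norm_num)) hM3 (convex_Icc a b) has (hIoo hξab)
  have hbound : |f2 ξ - f2 a| ≤ M₃ * (δ + h) := by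
    rw [Real.norm_eq_abs, Real.norm_eq_abs] at hmvt
    have : |ξ - a| ≤ δ + h := by
      rw [abs_of_nonneg (by linarith [hξab.1] : (0:ℝ) ≤ ξ - a)]
      have := hξab.2
      simp only [hbdef] at this
      linarith
    calc |f2 ξ - f2 a| ≤ M₃ * |ξ - a| := hmvt
      _ ≤ M₃ * (δ + h) := by nlinarith [abs_nonneg (ξ - a)]
  rw [hf2eq a has]
  calc |c - f2 a| = |f2 ξ - f2 a| := by rw [hceq]
    _ ≤ M₃ * (δ + h) := hbound
    _ = (δ + h) * M₃ := by ring
end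

section
/- Let h > 0, let x be a real number, and let f : ℝ → ℝ be of class C⁴ on [x, x + 3h], with |f''''(t)| ≤ M₄ for all t in [x, x + 3h]. Then | (1/h²) · ( 2 f(x) − 5 f(x + h) + 4 f(x + 2h) − f(x + 3h) ) − f''(x) | ≤ (25/4) h² M₄. -/
open Set

private lemma iterDW_congr_set {f : ℝ → ℝ} {s t : Set ℝ} {p : ℝ} (hst : s =ᶠ[nhds p] t)
    (n : ℕ) : iteratedDerivWithin n f s p = iteratedDerivWithin n f t p := by
  simp only [iteratedDerivWithin_eq_iteratedFDerivWithin,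
    iteratedFDerivWithin_congr_set hst n]

private lemma taylor_step (f : ℝ → ℝ) (x b B M : ℝ) (hxb : x < b) (hbB : b ≤ B)
    (hf : ContDiffOn ℝ 4 f (Icc x B))
    (hM : ∀ t ∈ Icc x B, |iteratedDerivWithin 4 f (Icc x B) t| ≤ M) :
    |f b - ∑ i ∈ Finset.range 4, (b - x) ^ i / (Nat.factorial i) *
        iteratedDerivWithin i f (Icc x B) x| ≤ M * (b - x) ^ 4 / 24 := by
  have hsub : Icc x b ⊆ Icc x B := Icc_subset_Icc le_rfl hbB
  have hf' : ContDiffOn ℝ 4 f (Icc x b) := hf.mono hsub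
  have hf3 : ContDiffOn ℝ 3 f (Icc x b) := hf'.of_le (by norm_num)
  have hdiff : DifferentiableOn ℝ (iteratedDerivWithin 3 f (Icc x b)) (Ioo x b) :=
    (hf'.differentiableOn_iteratedDerivWithin (by norm_num)
      (uniqueDiffOn_Icc hxb)).mono Ioo_subset_Icc_self
  obtain ⟨c, hc, hTay⟩ := taylor_mean_remainder_lagrange hxb.ne
    (by rwa [uIcc_of_le hxb.le]) (by rwa [uIcc_of_le hxb.le, uIoo_of_le hxb.le])
  rw [uIcc_of_le hxb.le] at hTay
  rw [uIoo_of_le hxb.le] at hc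
  -- congruence at interior point c
  have hcEq : Icc x b =ᶠ[nhds c] Icc x B := by
    rw [Filter.eventuallyEq_set]
    filter_upwards [Ioo_mem_nhds hc.1 hc.2] with y hy
    simp only [mem_Icc]
    constructor
    · rintro ⟨h1, h2⟩; exact ⟨h1, h2.trans hbB⟩
    · rintro ⟨h1, _⟩; exact ⟨h1, le_of_lt hy.2⟩
  -- congruence at the left endpoint x
  have hxEq : Icc x b =ᶠ[nhds x] Icc x B := by
    rw [Filter.eventuallyEq_set]
    filter_upwards [Iio_mem_nhds hxb] with y hy
    simp only [mem_Icc]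
    constructor
    · rintro ⟨h1, h2⟩; exact ⟨h1, h2.trans hbB⟩
    · rintro ⟨h1, _⟩; exact ⟨h1, le_of_lt hy⟩
  have hsum : ∑ i ∈ Finset.range 4, (b - x) ^ i / (Nat.factorial i) *
        iteratedDerivWithin i f (Icc x b) x
      = ∑ i ∈ Finset.range 4, (b - x) ^ i / (Nat.factorial i) *
        iteratedDerivWithin i f (Icc x B) x := by
    refine Finset.sum_congr rfl fun i _ => ?_
    rw [iterDW_congr_set hxEq]
  have h4 : iteratedDerivWithin 4 f (Icc x b) c = iteratedDerivWithin 4 f (Icc x B) c :=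
    iterDW_congr_set hcEq 4
  have hcB : c ∈ Icc x B := ⟨le_of_lt hc.1, (le_of_lt hc.2).trans hbB⟩
  have hMc := hM c hcB
  have hTay' : f b - ∑ i ∈ Finset.range 4, (b - x) ^ i / (Nat.factorial i) *
        iteratedDerivWithin i f (Icc x b) x
      = iteratedDerivWithin 4 f (Icc x b) c * (b - x) ^ 4 / 24 := by
    rw [taylor_within_apply] at hTay
    norm_num [Nat.factorial] at hTay
    rw [← hTay]
    congr 1
    refine Finset.sum_congr rfl fun i _ => ?_
    ring
  calc |f b - ∑ i ∈ Finset.range 4, (b - x) ^ i / (Nat.factorial i) *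
        iteratedDerivWithin i f (Icc x B) x|
      = |iteratedDerivWithin 4 f (Icc x B) c * (b - x) ^ 4 / 24| := by
        rw [← hsum, hTay', h4]
    _ ≤ M * (b - x) ^ 4 / 24 := by
        rw [abs_div, abs_mul, abs_pow]
        have hbx : (0:ℝ) ≤ b - x := by linarith
        rw [abs_of_nonneg hbx, abs_of_nonneg (by norm_num : (0:ℝ) ≤ 24)]
        gcongr

/-- Error bound for the uniform-grid one-sided four-point approximation of the second
derivative, used to compute the vorticity at the first irregular node next to the
interface. -/
theorem one_sided_second_derivative_uniform_four_point
    (h x : ℝ) (hh : 0 < h)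
    (f : ℝ → ℝ) (hf : ContDiffOn ℝ 4 f (Set.Icc x (x + 3 * h)))
    (M₄ : ℝ)
    (hM : ∀ t ∈ Set.Icc x (x + 3 * h),
      |iteratedDerivWithin 4 f (Set.Icc x (x + 3 * h)) t| ≤ M₄) :
    |(1 / h ^ 2) *
        (2 * f x - 5 * f (x + h) + 4 * f (x + 2 * h) - f (x + 3 * h))
      - iteratedDerivWithin 2 f (Set.Icc x (x + 3 * h)) x|
    ≤ 25 / 4 * h ^ 2 * M₄ := by
  set S := Set.Icc x (x + 3 * h) with hS
  set c0 := iteratedDerivWithin 0 f S x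
  set c1 := iteratedDerivWithin 1 f S x
  set c2 := iteratedDerivWithin 2 f S x
  set c3 := iteratedDerivWithin 3 f S x
  have hfx : f x = c0 := by simp [c0, iteratedDerivWithin_zero]
  have hsum : ∀ b : ℝ, ∑ i ∈ Finset.range 4, (b - x) ^ i / (Nat.factorial i) *
      iteratedDerivWithin i f S x
      = c0 + (b - x) * c1 + (b - x) ^ 2 / 2 * c2 + (b - x) ^ 3 / 6 * c3 := by
    intro b
    simp only [Finset.sum_range_succ, Finset.sum_range_zero, Nat.factorial]
    rw [iteratedDerivWithin_zero]
    rw [hfx]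
    push_cast
    ring
  have h1 := taylor_step f x (x + h) (x + 3 * h) M₄ (by linarith) (by linarith) hf hM
  have h2 := taylor_step f x (x + 2 * h) (x + 3 * h) M₄ (by linarith) (by linarith) hf hM
  have h3 := taylor_step f x (x + 3 * h) (x + 3 * h) M₄ (by linarith) (by linarith) hf hM
  rw [hsum] at h1 h2 h3
  have e1 : x + h - x = h := by ring
  have e2 : x + 2 * h - x = 2 * h := by ring
  have e3 : x + 3 * h - x = 3 * h := by ring
  rw [e1] at h1; rw [e2] at h2; rw [e3] at h3
  set R1 := f (x + h) - (c0 + h * c1 + h ^ 2 / 2 * c2 + h ^ 3 / 6 * c3) with hR1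
  set R2 := f (x + 2 * h) - (c0 + 2 * h * c1 + (2 * h) ^ 2 / 2 * c2 + (2 * h) ^ 3 / 6 * c3)
    with hR2
  set R3 := f (x + 3 * h) - (c0 + 3 * h * c1 + (3 * h) ^ 2 / 2 * c2 + (3 * h) ^ 3 / 6 * c3)
    with hR3
  have key : (1 / h ^ 2) * (2 * f x - 5 * f (x + h) + 4 * f (x + 2 * h) - f (x + 3 * h)) - c2
      = (-5 * R1 + 4 * R2 - R3) / h ^ 2 := by
    have hh2 : h ^ 2 ≠ 0 := by positivity
    rw [hR1, hR2, hR3, hfx]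
    field_simp [hR1, hR2, hR3, hfx]
    ring
  rw [key, abs_div, abs_of_nonneg (by positivity : (0:ℝ) ≤ h ^ 2),
    div_le_iff₀ (by positivity : (0:ℝ) < h ^ 2)]
  have hb : |(-5 * R1 + 4 * R2 - R3)| ≤ 5 * |R1| + 4 * |R2| + |R3| := by
    calc |(-5 * R1 + 4 * R2 - R3)| ≤ |(-5 * R1 + 4 * R2)| + |R3| := abs_sub _ _
      _ ≤ |(-5) * R1| + |4 * R2| + |R3| := by gcongr; exact abs_add_le _ _
      _ = 5 * |R1| + 4 * |R2| + |R3| := by rw [abs_mul, abs_mul]; norm_num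
  have hM0 : 0 ≤ M₄ := le_trans (abs_nonneg _) (hM x ⟨le_rfl, by linarith⟩)
  have b1 : |R1| ≤ M₄ * h ^ 4 / 24 := h1
  have b2 : |R2| ≤ M₄ * (2 * h) ^ 4 / 24 := h2
  have b3 : |R3| ≤ M₄ * (3 * h) ^ 4 / 24 := h3
  nlinarith [abs_nonneg R1, abs_nonneg R2, abs_nonneg R3, sq_nonneg h, pow_pos hh 2]
end
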